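/- Let μ ≠ 0, β ∈ ℝ, and set α = β²/4 (so ρ = 0). If y > 0 is twice differentiable and solves y'' + (y')²/y + (μ + β/y³) y' - μ² y + βμ/y² - (β²/4)/y⁵ = 0, then I(z) = e^{-μz} (2y(y' + μy) - β/y) · exp( β / (β - 2μ y³ - 2 y² y') ) is constant on any interval where β - 2μy³ - 2y²y' ≠ 0. -/

import Mathlib

lemma const_of_hasDerivAt_zero {f : ℝ → ℝ} {a b : ℝ}
    (h : ∀ z ∈ Set.Ioo a b, HasDerivAt f 0 z) :
    ∀ x ∈ Set.Ioo a b, ∀ x' ∈ Set.Ioo a b, f x = f x' := by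
  have main : ∀ x ∈ Set.Ioo a b, ∀ x' ∈ Set.Ioo a b, x ≤ x' → f x' = f x := by
    intro x hx x' hx' hle
    have hsub : Set.Icc x x' ⊆ Set.Ioo a b := fun z hz =>
      ⟨lt_of_lt_of_le hx.1 hz.1, lt_of_le_of_lt hz.2 hx'.2⟩
    exact constant_of_has_deriv_right_zero
      (fun z hz => (h z (hsub hz)).continuousAt.continuousWithinAt)
      (fun z hz => (h z (hsub (Set.Ico_subset_Icc_self hz))).hasDerivWithinAt)
      x' (Set.right_mem_Icc.2 hle)
  intro x hx x' hx'
  rcases le_total x x' with h1 | h1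
  · exact (main x hx x' hx' h1).symm
  · exact main x' hx' x hx h1

theorem stmt_16 (β μ : ℝ) (hμ : μ ≠ 0)
    (y : ℝ → ℝ) (hy : Differentiable ℝ y) (hy' : Differentiable ℝ (deriv y))
    (hypos : ∀ z : ℝ, 0 < y z)
    (heq : ∀ z : ℝ,
      deriv (deriv y) z + (deriv y z) ^ 2 / y z + (μ + β / y z ^ 3) * deriv y z
        - μ ^ 2 * y z + β * μ / y z ^ 2 - (β ^ 2 / 4) / y z ^ 5 = 0)
    (a b : ℝ)
    (hne : ∀ z ∈ Set.Ioo a b, β - 2 * μ * y z ^ 3 - 2 * y z ^ 2 * deriv y z ≠ 0) :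
    ∀ x ∈ Set.Ioo a b, ∀ x' ∈ Set.Ioo a b,
      Real.exp (-(μ * x)) * (2 * y x * (deriv y x + μ * y x) - β / y x) *
        Real.exp (β / (β - 2 * μ * y x ^ 3 - 2 * y x ^ 2 * deriv y x))
      = Real.exp (-(μ * x')) * (2 * y x' * (deriv y x' + μ * y x') - β / y x') *
        Real.exp (β / (β - 2 * μ * y x' ^ 3 - 2 * y x' ^ 2 * deriv y x')) := by
  refine const_of_hasDerivAt_zero
    (f := fun w => Real.exp (-(μ * w)) * (2 * y w * (deriv y w + μ * y w) - β / y w) *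
      Real.exp (β / (β - 2 * μ * y w ^ 3 - 2 * y w ^ 2 * deriv y w))) ?_
  intro z hz
  have hp : y z ≠ 0 := (hypos z).ne'
  have hG : β - 2 * μ * y z ^ 3 - 2 * y z ^ 2 * deriv y z ≠ 0 := hne z hz
  set p := y z with hpd
  set q := deriv y z with hqd
  set r := deriv (deriv y) z with hrd
  have hyz : HasDerivAt y q z := hy.differentiableAt.hasDerivAt
  have hy'z : HasDerivAt (deriv y) r z := hy'.differentiableAt.hasDerivAt
  -- E
  have hE : HasDerivAt (fun w => Real.exp (-(μ * w))) (-μ * Real.exp (-(μ * z))) z := by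
    have h1 : HasDerivAt (fun w => -(μ * w)) (-μ) z := by
      have h := ((hasDerivAt_id z).const_mul μ).neg
      simp only [mul_one] at h
      exact h
    simpa [mul_comm] using h1.exp
  -- F
  have hF : HasDerivAt (fun w => 2 * y w * (deriv y w + μ * y w) - β / y w)
      (2 * q * (q + μ * p) + 2 * p * (r + μ * q) + β * q / p ^ 2) z := by
    have h2 : HasDerivAt (fun w => 2 * y w) (2 * q) z := by simpa using hyz.const_mul 2
    have h3 : HasDerivAt (fun w => deriv y w + μ * y w) (r + μ * q) z :=
      hy'z.add (hyz.const_mul μ)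
    have h5 : HasDerivAt (fun w => β / y w) (β * (-q / p ^ 2)) z := by
      simpa [div_eq_mul_inv] using (hyz.inv hp).const_mul β
    have h6 : HasDerivAt (fun w => 2 * y w * (deriv y w + μ * y w) - β / y w) _ z :=
      (h2.mul h3).sub h5
    convert h6 using 1
    simp only [← hpd, ← hqd]
    ring
  -- G
  have hGz : HasDerivAt (fun w => β - 2 * μ * y w ^ 3 - 2 * y w ^ 2 * deriv y w)
      (-(6 * μ * p ^ 2 * q) - 4 * p * q ^ 2 - 2 * p ^ 2 * r) z := by
    have h6 : HasDerivAt (fun w => y w ^ 3) (3 * p ^ 2 * q) z := by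
      exact (hyz.pow 3).congr_deriv (by norm_num [← hpd])
    have h7 : HasDerivAt (fun w => y w ^ 2) (2 * p * q) z := by
      exact (hyz.pow 2).congr_deriv (by norm_num [← hpd])
    have h8 : HasDerivAt (fun w => β - 2 * μ * y w ^ 3 - 2 * y w ^ 2 * deriv y w) _ z :=
      ((hasDerivAt_const z β).sub (h6.const_mul (2 * μ))).sub
      (((h7.const_mul 2).mul hy'z))
    convert h8 using 1
    simp only [← hpd, ← hqd]
    ring
  -- X
  have hX : HasDerivAt
      (fun w => Real.exp (β / (β - 2 * μ * y w ^ 3 - 2 * y w ^ 2 * deriv y w)))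
      (Real.exp (β / (β - 2 * μ * p ^ 3 - 2 * p ^ 2 * q)) *
        (β * (-(-(6 * μ * p ^ 2 * q) - 4 * p * q ^ 2 - 2 * p ^ 2 * r) /
          (β - 2 * μ * p ^ 3 - 2 * p ^ 2 * q) ^ 2))) z := by
    have h9 : HasDerivAt (fun w => β / (β - 2 * μ * y w ^ 3 - 2 * y w ^ 2 * deriv y w))
        (β * (-(-(6 * μ * p ^ 2 * q) - 4 * p * q ^ 2 - 2 * p ^ 2 * r) /
          (β - 2 * μ * p ^ 3 - 2 * p ^ 2 * q) ^ 2)) z := by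
      simpa [div_eq_mul_inv] using (hGz.inv hG).const_mul β
    exact h9.exp
  have hD := (hE.mul hF).mul hX
  have hr : r = -((q) ^ 2 / p + (μ + β / p ^ 3) * q - μ ^ 2 * p + β * μ / p ^ 2
      - (β ^ 2 / 4) / p ^ 5) := by
    have := heq z
    linarith
  have hzero :
      (-μ * Real.exp (-(μ * z)) * (2 * p * (q + μ * p) - β / p) +
        Real.exp (-(μ * z)) * (2 * q * (q + μ * p) + 2 * p * (r + μ * q) + β * q / p ^ 2)) *
        Real.exp (β / (β - 2 * μ * p ^ 3 - 2 * p ^ 2 * q)) +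
      Real.exp (-(μ * z)) * (2 * p * (q + μ * p) - β / p) *
        (Real.exp (β / (β - 2 * μ * p ^ 3 - 2 * p ^ 2 * q)) *
          (β * (-(-(6 * μ * p ^ 2 * q) - 4 * p * q ^ 2 - 2 * p ^ 2 * r) /
            (β - 2 * μ * p ^ 3 - 2 * p ^ 2 * q) ^ 2))) = 0 := by
    generalize Real.exp (-(μ * z)) = E
    generalize Real.exp (β / (β - 2 * μ * p ^ 3 - 2 * p ^ 2 * q)) = X
    generalize hGd : β - 2 * μ * p ^ 3 - 2 * p ^ 2 * q = G at hG ⊢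
    rw [hr]
    field_simp
    subst hGd
    ring
  exact hD.congr_deriv hzero
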